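/- Let G be a Lie algebra and let u ↦ M_u be a family of linear maps M_u : G → G indexed linearly by elements u of a module, defining a bracket on G ⊕ (module) by [(X,u),(Y,v)] = ([X,Y] + M_u(Y) − M_v(X), 0). This bracket satisfies the Jacobi identity if and only if (a) each M_u is a derivation of G, and (b) the maps commute pairwise: M_u ∘ M_v = M_v ∘ M_u for all u, v. -/
import Mathlib


/-- The bracket on `G ⊕ W` associated to a family of maps `M_u : G → G`:
`[(X,u),(Y,v)] = ([X,Y] + M_u(Y) − M_v(X), 0)`. -/
def extBracketM {K G W : Type*} [Field K] [LieRing G] [LieAlgebra K G]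
    [AddCommGroup W] [Module K W]
    (M : W →ₗ[K] G →ₗ[K] G) (p q : G × W) : G × W :=
  (⁅p.1, q.1⁆ + M p.2 q.1 - M q.2 p.1, 0)

/-- **Linear one-dimensional extensions of linear Hamiltonian matrices (general
criterion).**  Let `G` be a Lie algebra over a field `K` of characteristic zero,
`W` a `K`-vector space, and `u ↦ M_u` a linear family of endomorphisms of `G`.
The bracket `[(X,u),(Y,v)] = ([X,Y] + M_u(Y) − M_v(X), 0)` on `G ⊕ W` satisfies
the Jacobi identity if and only if each `M_u` is a derivation of `G` and the
family commutes pairwise: `M_u ∘ M_v = M_v ∘ M_u`. -/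
theorem stmt13 {K G W : Type*} [Field K] [CharZero K] [LieRing G] [LieAlgebra K G]
    [AddCommGroup W] [Module K W]
    (M : W →ₗ[K] G →ₗ[K] G) :
    (∀ x y z : G × W,
        extBracketM M x (extBracketM M y z) + extBracketM M y (extBracketM M z x)
          + extBracketM M z (extBracketM M x y) = 0)
      ↔ ((∀ (u : W) (X Y : G), M u ⁅X, Y⁆ = ⁅M u X, Y⁆ + ⁅X, M u Y⁆)
          ∧ ∀ (u v : W) (X : G), M u (M v X) = M v (M u X)) := by
  constructor
  · intro h
    constructor
    · intro u X Y
      have h1 := h (X, 0) (Y, 0) (0, u)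
      simp [extBracketM, Prod.ext_iff] at h1
      rw [← lie_skew (M u Y) X] at h1
      rw [← lie_skew (M u X) Y]
      apply eq_of_sub_eq_zero
      rw [← h1]
      abel
    · intro u v X
      have h1 := h (X, 0) (0, u) (0, v)
      simp [extBracketM, Prod.ext_iff] at h1
      exact add_neg_eq_zero.mp h1
  · rintro ⟨hd, hc⟩ ⟨X, u⟩ ⟨Y, v⟩ ⟨Z, w⟩
    simp only [extBracketM, Prod.mk.injEq, map_zero, LinearMap.zero_apply, lie_zero, zero_lie,
      sub_zero, add_zero, zero_add, map_add, map_sub, lie_add, lie_sub, Prod.mk_add_mk,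
      Prod.mk_eq_zero, hd, hc]
    constructor
    · rw [← lie_skew (M v Z) X, ← lie_skew (M u Y) Z, ← lie_skew (M w X) Y,
        ← lie_jacobi X Y Z]
      abel
    · trivial
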